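/- arXiv:1807.05000 — 4 statements merged into one kernel-verified Lean document; each statement's English description precedes it below -/
import Mathlib

section
/- For every nonnegative integer u, Σ_{m=0}^{⌊u/2⌋} 4^m · C(u−2m, m) = 2^{u−1} + (1/4)(1 − i/√7)·((−1+i√7)/2)^u + (1/4)(1 + i/√7)·((−1−i√7)/2)^u, where the right-hand side is interpreted as a complex expression that evaluates to a real (in fact rational dyadic) number. -/
open Finset Complex

noncomputable def sq7 : ℂ := (Real.sqrt 7 : ℝ)

lemma sq7_sq : sq7 ^ 2 = 7 := by
  rw [sq7, ← Complex.ofReal_pow, Real.sq_sqrt (by norm_num : (0:ℝ) ≤ 7)]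
  norm_num

lemma sq7_ne : sq7 ≠ 0 := by
  rw [sq7]; simp only [ne_eq, Complex.ofReal_eq_zero]; positivity

noncomputable def T (u : ℕ) : ℂ :=
  ∑ m ∈ Finset.range (u + 1), (4 : ℂ) ^ m * (Nat.choose (u - 2 * m) m : ℂ)

noncomputable def g (u : ℕ) : ℂ :=
  (2 : ℂ) ^ u / 2
    + (1 / 4) * (1 - Complex.I / sq7) * (((-1 + Complex.I * sq7) / 2) ^ u)
    + (1 / 4) * (1 + Complex.I / sq7) * (((-1 - Complex.I * sq7) / 2) ^ u)

lemma pascal (u m : ℕ) :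
    Nat.choose (u + 1 - 2 * m) (m + 1)
      = Nat.choose (u - 2 * m) m + Nat.choose (u - 2 * m) (m + 1) := by
  rcases le_or_gt (2 * m) u with h | h
  · have : u + 1 - 2 * m = (u - 2 * m) + 1 := by omega
    rw [this, Nat.choose_succ_succ]
  · have h1 : u + 1 - 2 * m = 0 := by omega
    have h2 : u - 2 * m = 0 := by omega
    rw [h1, h2, Nat.choose_eq_zero_of_lt (by omega), Nat.choose_eq_zero_of_lt (by omega)]

lemma choose_zero (u m : ℕ) (h : u < 2 * m) (hm : 1 ≤ m) :
    Nat.choose (u - 2 * m) m = 0 := by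
  have h2 : u - 2 * m = 0 := by omega
  rw [h2, Nat.choose_eq_zero_of_lt (by omega)]

lemma T_rec (u : ℕ) : T (u + 3) = T (u + 2) + 4 * T u := by
  have h1 : T (u+3) = (∑ m ∈ Finset.range (u+3),
      ((4:ℂ) * ((4:ℂ)^m * (Nat.choose (u-2*m) m : ℂ))
        + (4:ℂ)^(m+1) * (Nat.choose (u-2*m) (m+1) : ℂ))) + 1 := by
    rw [T, Finset.sum_range_succ']
    congr 1
    · apply Finset.sum_congr rfl
      intro m _
      have e1 : u + 3 - 2*(m+1) = u + 1 - 2*m := by omega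
      rw [e1, pascal]
      push_cast
      ring
    · norm_num
  have hA : (∑ m ∈ Finset.range (u+3), (4:ℂ)^m * (Nat.choose (u-2*m) m : ℂ)) = T u := by
    rw [T]
    symm
    apply Finset.sum_subset
    · exact Finset.range_subset_range.mpr (by omega)
    · intro m hm hnm
      simp only [Finset.mem_range] at hm hnm
      rw [choose_zero u m (by omega) (by omega)]
      simp
  have hB : (∑ m ∈ Finset.range (u+3), (4:ℂ)^(m+1) * (Nat.choose (u-2*m) (m+1) : ℂ))
      = T (u+2) - 1 := by
    have hT : T (u+2) = (∑ m ∈ Finset.range (u+2),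
        (4:ℂ)^(m+1) * (Nat.choose (u+2-2*(m+1)) (m+1) : ℂ)) + 1 := by
      rw [T, Finset.sum_range_succ']
      norm_num
    rw [hT, Finset.sum_range_succ]
    have hz : Nat.choose (u - 2*(u+2)) (u+2+1) = 0 := by
      apply Nat.choose_eq_zero_of_lt; omega
    rw [hz]
    have : ∀ m ∈ Finset.range (u+2),
        (4:ℂ)^(m+1) * (Nat.choose (u-2*m) (m+1) : ℂ)
          = (4:ℂ)^(m+1) * (Nat.choose (u+2-2*(m+1)) (m+1) : ℂ) := by
      intro m _
      have e : u - 2*m = u + 2 - 2*(m+1) := by omega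
      rw [e]
    rw [Finset.sum_congr rfl this]
    push_cast
    ring
  rw [h1, Finset.sum_add_distrib, ← Finset.mul_sum, hA, hB]
  ring

lemma ht : (Complex.I * sq7) ^ 2 = -7 := by
  rw [mul_pow, Complex.I_sq, sq7_sq]; ring

lemma hdiv : Complex.I / sq7 = Complex.I * sq7 / 7 := by
  rw [div_eq_div_iff sq7_ne (by norm_num : (7:ℂ) ≠ 0)]
  linear_combination (-Complex.I) * sq7_sq

lemma root1 : ((-1 + Complex.I * sq7) / 2) ^ 3 = ((-1 + Complex.I * sq7) / 2) ^ 2 + 4 := by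
  linear_combination ((Complex.I * sq7 - 5) / 8) * ht

lemma root2 : ((-1 - Complex.I * sq7) / 2) ^ 3 = ((-1 - Complex.I * sq7) / 2) ^ 2 + 4 := by
  linear_combination (-(Complex.I * sq7 + 5) / 8) * ht

lemma g_rec (u : ℕ) : g (u + 3) = g (u + 2) + 4 * g u := by
  simp only [g, pow_add]
  linear_combination ((1/4) * (1 - Complex.I / sq7) * ((-1 + Complex.I * sq7) / 2) ^ u) * root1
    + ((1/4) * (1 + Complex.I / sq7) * ((-1 - Complex.I * sq7) / 2) ^ u) * root2

lemma g0 : g 0 = 1 := by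
  simp only [g, pow_zero]
  field_simp
  ring

lemma g1 : g 1 = 1 := by
  simp only [g, pow_one, hdiv]
  linear_combination (-1/28) * ht

lemma g2 : g 2 = 1 := by
  simp only [g, hdiv]
  linear_combination (9/56) * ht

lemma T0 : T 0 = 1 := by norm_num [T]

lemma T1 : T 1 = 1 := by norm_num [T, Finset.sum_range_succ]

lemma T2 : T 2 = 1 := by norm_num [T, Finset.sum_range_succ]

lemma T_eq_g : ∀ u, T u = g u := by
  intro u
  induction u using Nat.strong_induction_on with
  | _ u ih =>
    match u with
    | 0 => rw [T0, g0]
    | 1 => rw [T1, g1]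
    | 2 => rw [T2, g2]
    | (n+3) => rw [T_rec, g_rec, ih (n+2) (by omega), ih n (by omega)]

theorem closed_form_a_u (u : ℕ) :
    (∑ m ∈ Finset.range (u / 2 + 1),
        (4 : ℂ) ^ m * (Nat.choose (u - 2 * m) m : ℂ)) =
      (2 : ℂ) ^ ((u : ℤ) - 1)
        + (1 / 4) * (1 - Complex.I / (Real.sqrt 7 : ℂ)) *
            (((-1 + Complex.I * (Real.sqrt 7 : ℂ)) / 2) ^ u)
        + (1 / 4) * (1 + Complex.I / (Real.sqrt 7 : ℂ)) *
            (((-1 - Complex.I * (Real.sqrt 7 : ℂ)) / 2) ^ u) := by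
  have hS : (∑ m ∈ Finset.range (u / 2 + 1),
      (4 : ℂ) ^ m * (Nat.choose (u - 2 * m) m : ℂ)) = T u := by
    rw [T]
    apply Finset.sum_subset
    · exact Finset.range_subset_range.mpr (by omega)
    · intro m hm hnm
      simp only [Finset.mem_range] at hm hnm
      rw [choose_zero u m (by omega) (by omega)]
      simp
  have h2 : (2:ℂ) ^ ((u:ℤ) - 1) = 2 ^ u / 2 := by
    rw [zpow_sub₀ (two_ne_zero), zpow_natCast, zpow_one]
  rw [hS, T_eq_g u, h2]
  simp only [g, sq7]
end

section
/- For all integers m ≥ 0 and n > 0, with u(m,n) := Σ_{y=n}^{⌊m/2⌋} 2^{2y−m}·C(m−2y, y), one has 2·u(m,n) + u(m−1,n) + u(m−2,n) = Σ_{y=0}^{m−2n−1} 2^{−y}·C(y, n−1) (where sums with negative upper limit are 0). -/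
open Finset

/-- Binomial coefficient on the integers, with `C a b = 0` unless `0 ≤ b ≤ a`. -/
def C (a b : ℤ) : ℚ := if 0 ≤ b ∧ b ≤ a then (Nat.choose a.toNat b.toNat : ℚ) else 0

/-- `u(m,n) = Σ_{y=n}^{⌊m/2⌋} 2^{2y−m} · C(m−2y, y)`. -/
noncomputable def U (m n : ℤ) : ℚ := ∑ y ∈ Finset.Icc n (m / 2), (2 : ℚ) ^ (2 * y - m) * C (m - 2 * y) y

lemma C_zero {a b : ℤ} (h : ¬(0 ≤ b ∧ b ≤ a)) : C a b = 0 := if_neg h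

lemma pascal_s4 (a b : ℤ) (hb : 1 ≤ b) :
    C a b = C (a - 1) b + C (a - 1) (b - 1) := by
  unfold C
  by_cases h1 : 0 ≤ b ∧ b ≤ a
  · have key : a.toNat.choose b.toNat
        = (a-1).toNat.choose (b-1).toNat + (a-1).toNat.choose b.toNat := by
      have ha : a.toNat = (a-1).toNat + 1 := by omega
      have hbn : b.toNat = (b-1).toNat + 1 := by omega
      rw [ha, hbn, Nat.choose_succ_succ', ← hbn]
    rw [if_pos h1, if_pos (show 0 ≤ b - 1 ∧ b - 1 ≤ a - 1 by omega), key]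
    by_cases h2 : b ≤ a - 1
    · rw [if_pos (show 0 ≤ b ∧ b ≤ a - 1 by omega)]; push_cast; ring
    · rw [if_neg (show ¬(0 ≤ b ∧ b ≤ a - 1) by omega),
        Nat.choose_eq_zero_of_lt (show (a-1).toNat < b.toNat by omega)]
      push_cast; ring
  · rw [if_neg h1, if_neg (show ¬(0 ≤ b ∧ b ≤ a - 1) by omega),
      if_neg (show ¬(0 ≤ b - 1 ∧ b - 1 ≤ a - 1) by omega)]
    ring

lemma sum_Icc_bot (f : ℤ → ℚ) {a b : ℤ} (h : a ≤ b) :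
    ∑ x ∈ Icc a b, f x = f a + ∑ x ∈ Icc (a+1) b, f x := by
  have he : Icc a b = insert a (Icc (a+1) b) := by
    ext x; simp only [Finset.mem_Icc, Finset.mem_insert]; omega
  rw [he, Finset.sum_insert (by simp only [Finset.mem_Icc]; omega)]

lemma sum_Icc_top (f : ℤ → ℚ) {a b : ℤ} (h : a ≤ b) :
    ∑ x ∈ Icc a b, f x = (∑ x ∈ Icc a (b-1), f x) + f b := by
  have he : Icc a b = insert b (Icc a (b-1)) := by
    ext x; simp only [Finset.mem_Icc, Finset.mem_insert]; omega
  rw [he, Finset.sum_insert (by simp only [Finset.mem_Icc]; omega), add_comm]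

lemma keyrec (m n : ℤ) (hn : 0 < n) :
    2 * U m n = U (m-1) n + U (m-3) n
      + 2 ^ (2*n - m + 1) * C (m - 2*n - 1) (n - 1) := by
  have h2 : (2:ℚ) ≠ 0 := two_ne_zero
  have step1 : 2 * U m n
      = (∑ y ∈ Icc n (m/2), (2:ℚ) ^ (2*y - (m-1)) * C (m - 1 - 2*y) y)
        + ∑ y ∈ Icc n (m/2), (2:ℚ) ^ (2*y - m + 1) * C (m - 1 - 2*y) (y-1) := by
    unfold U
    rw [Finset.mul_sum, ← Finset.sum_add_distrib]
    apply Finset.sum_congr rfl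
    intro y hy
    rw [Finset.mem_Icc] at hy
    have hp := pascal_s4 (m - 2*y) y (by omega)
    rw [show m - 2*y - 1 = m - 1 - 2*y by ring] at hp
    rw [hp, show 2*y - (m-1) = 2*y - m + 1 by ring,
      show (2:ℚ) ^ (2*y - m + 1) = 2 * (2:ℚ) ^ (2*y - m) by
        rw [zpow_add₀ h2, zpow_one]; ring]
    ring
  have hS1 : (∑ y ∈ Icc n (m/2), (2:ℚ) ^ (2*y - (m-1)) * C (m - 1 - 2*y) y)
      = U (m-1) n := by
    unfold U
    exact (Finset.sum_subset (Finset.Icc_subset_Icc_right (by omega))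
      (by
        intro y hy hy'
        rw [Finset.mem_Icc] at hy
        rw [Finset.mem_Icc] at hy'
        rw [C_zero (by omega), mul_zero])).symm
  have hmap : (∑ y ∈ Icc n (m/2), (2:ℚ) ^ (2*y - m + 1) * C (m - 1 - 2*y) (y-1))
      = ∑ z ∈ Icc (n-1) (m/2 - 1),
          (2:ℚ) ^ (2*z - (m-3)) * C (m - 3 - 2*z) z := by
    rw [show Icc n (m/2) = Finset.map (addRightEmbedding 1) (Icc (n-1) (m/2-1)) by
      rw [Finset.map_add_right_Icc]; congr 1 <;> ring]
    rw [Finset.sum_map]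
    apply Finset.sum_congr rfl
    intro z _
    simp only [addRightEmbedding_apply]
    rw [show 2*(z+1) - m + 1 = 2*z - (m-3) by ring,
      show m - 1 - 2*(z+1) = m - 3 - 2*z by ring,
      show z + 1 - 1 = z by ring]
  have hS2 : (∑ z ∈ Icc (n-1) (m/2 - 1),
        (2:ℚ) ^ (2*z - (m-3)) * C (m - 3 - 2*z) z)
      = U (m-3) n + 2 ^ (2*n - m + 1) * C (m - 2*n - 1) (n - 1) := by
    by_cases hc : n ≤ m / 2
    · rw [sum_Icc_bot _ (by omega)]
      rw [show n - 1 + 1 = n by ring]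
      have hrest : (∑ z ∈ Icc n (m/2 - 1),
            (2:ℚ) ^ (2*z - (m-3)) * C (m - 3 - 2*z) z) = U (m-3) n := by
        unfold U
        exact (Finset.sum_subset (Finset.Icc_subset_Icc_right (by omega))
          (by
            intro z hz hz'
            rw [Finset.mem_Icc] at hz
            rw [Finset.mem_Icc] at hz'
            rw [C_zero (by omega), mul_zero])).symm
      rw [hrest, show 2*(n-1) - (m-3) = 2*n - m + 1 by ring,
        show m - 3 - 2*(n-1) = m - 2*n - 1 by ring]
      ring
    · rw [Finset.Icc_eq_empty (by omega), Finset.sum_empty]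
      have hu : U (m-3) n = 0 := by
        unfold U
        rw [Finset.Icc_eq_empty (by omega), Finset.sum_empty]
      rw [hu, C_zero (by omega)]
      ring
  rw [step1, hS1, hmap, hS2]; ring

theorem two_U_add (m n : ℤ) (hm : 0 ≤ m) (hn : 0 < n) :
    2 * U m n + U (m - 1) n + U (m - 2) n =
      ∑ y ∈ Finset.Icc 0 (m - 2 * n - 1), (2 : ℚ) ^ (-y) * C y (n - 1) := by
  obtain ⟨k, rfl⟩ : ∃ k : ℕ, m = (k : ℤ) := ⟨m.toNat, by omega⟩
  clear hm
  induction k with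
  | zero =>
    have h0 : U ((0:ℕ):ℤ) n = 0 := by
      unfold U; rw [Finset.Icc_eq_empty (by omega), Finset.sum_empty]
    have h1 : U (((0:ℕ):ℤ) - 1) n = 0 := by
      unfold U; rw [Finset.Icc_eq_empty (by omega), Finset.sum_empty]
    have h2 : U (((0:ℕ):ℤ) - 2) n = 0 := by
      unfold U; rw [Finset.Icc_eq_empty (by omega), Finset.sum_empty]
    rw [h0, h1, h2, Finset.Icc_eq_empty (by omega), Finset.sum_empty]
    ring
  | succ k ih =>
    have hcast : ((k + 1 : ℕ) : ℤ) = (k : ℤ) + 1 := by push_cast; ring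
    rw [hcast]
    set m : ℤ := (k : ℤ) with hmdef
    have hk := keyrec (m+1) n hn
    rw [show m + 1 - 1 = m by ring, show m + 1 - 3 = m - 2 by ring,
      show 2*n - (m+1) + 1 = 2*n - m by ring,
      show m + 1 - 2*n - 1 = m - 2*n by ring] at hk
    rw [show m + 1 - 2 = m - 1 by ring, show m + 1 - 1 = m by ring, hk]
    by_cases hc : 0 ≤ m - 2*n
    · rw [show m + 1 - 2*n - 1 = m - 2*n by ring,
        sum_Icc_top _ (by omega), ← ih]
      rw [show -(m - 2*n) = 2*n - m by ring]
      ring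
    · have hrhs0 : (∑ y ∈ Finset.Icc (0:ℤ) (m - 2*n - 1),
          (2:ℚ) ^ (-y) * C y (n-1)) = 0 := by
        rw [Finset.Icc_eq_empty (by omega), Finset.sum_empty]
      rw [Finset.Icc_eq_empty (show ¬(0:ℤ) ≤ m + 1 - 2*n - 1 by omega),
        Finset.sum_empty, C_zero (by omega)]
      rw [hrhs0] at ih
      linarith
end

section
/- Let s(u) = Σ_{z=0}^{⌊u/2⌋} 4^z·C(u−2z, z). Then for all integers m ≥ 4, s(m) + 3·s(m−2) + 4·s(m−4) = 2^m. -/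
open Finset

/-- `s u = Σ_{z=0}^{⌊u/2⌋} 4^z · C(u−2z, z)`. -/
def s (u : ℕ) : ℕ := ∑ z ∈ Finset.range (u / 2 + 1), 4 ^ z * Nat.choose (u - 2 * z) z

lemma s_ext (u N : ℕ) (h : u / 2 + 1 ≤ N) :
    s u = ∑ z ∈ Finset.range N, 4 ^ z * Nat.choose (u - 2 * z) z := by
  rw [s]
  apply Finset.sum_subset (Finset.range_subset_range.2 h)
  intro z hz hz2
  simp only [Finset.mem_range, not_lt] at hz hz2
  have h1 : u - 2 * z = 0 := by omega
  have h2 : 0 < z := by omega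
  rw [h1, Nat.choose_eq_zero_of_lt h2, mul_zero]

lemma pas (n z : ℕ) : (n + 1 - 2 * z).choose (z + 1)
    = (n - 2 * z).choose (z + 1) + (n - 2 * z).choose z := by
  rcases le_or_gt (2 * z) n with h | h
  · have e : n + 1 - 2 * z = (n - 2 * z) + 1 := by omega
    rw [e, Nat.choose_succ_succ, add_comm]
  · have e1 : n + 1 - 2 * z = 0 := by omega
    have e2 : n - 2 * z = 0 := by omega
    have hz : 0 < z := by omega
    simp [e1, e2, Nat.choose_eq_zero_of_lt hz, Nat.choose_eq_zero_of_lt (Nat.succ_pos z)]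

lemma s_rec (n : ℕ) : s (n + 3) = s (n + 2) + 4 * s n := by
  rw [s_ext (n + 3) (n + 2) (by omega), s_ext (n + 2) (n + 2) (by omega),
    s_ext n (n + 1) (by omega)]
  rw [Finset.sum_range_succ' _ (n + 1), Finset.sum_range_succ' (fun z => 4 ^ z * Nat.choose (n + 2 - 2 * z) z) (n + 1)]
  have key : ∀ x ∈ Finset.range (n + 1),
      4 ^ (x + 1) * ((n + 3) - 2 * (x + 1)).choose (x + 1)
      = 4 ^ (x + 1) * ((n + 2) - 2 * (x + 1)).choose (x + 1)
        + 4 * (4 ^ x * ((n - 2 * x)).choose x) := by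
    intro x _
    have e1 : n + 3 - 2 * (x + 1) = n + 1 - 2 * x := by omega
    have e2 : n + 2 - 2 * (x + 1) = n - 2 * x := by omega
    rw [e1, e2, pas, mul_add, pow_succ]
    ring
  rw [Finset.sum_congr rfl key, Finset.sum_add_distrib, ← Finset.mul_sum]
  simp [Nat.choose]
  ring

lemma aux : ∀ n : ℕ, s (n + 4) + 3 * s (n + 2) + 4 * s n = 2 ^ (n + 4)
  | 0 => by decide
  | 1 => by decide
  | 2 => by decide
  | (k + 3) => by
    have h1 := aux (k + 2)
    have h2 := aux k
    have r1 := s_rec (k + 4)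
    have r2 := s_rec (k + 2)
    have r3 := s_rec k
    have e : (2 : ℕ) ^ (k + 3 + 4) = 2 * 2 ^ (k + 2 + 4) := by ring
    have e2 : (2 : ℕ) ^ (k + 2 + 4) = 4 * 2 ^ (k + 4) := by ring
    ring_nf at h1 h2 r1 r2 r3 e e2 ⊢
    omega

theorem s_combination_eq_pow (m : ℕ) (hm : 4 ≤ m) :
    s m + 3 * s (m - 2) + 4 * s (m - 4) = 2 ^ m := by
  obtain ⟨n, rfl⟩ : ∃ n, m = n + 4 := ⟨m - 4, by omega⟩
  have e1 : n + 4 - 2 = n + 2 := by omega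
  have e2 : n + 4 - 4 = n := by omega
  rw [e1, e2, aux]
end

section
/- Define s̄(m,n) = Σ_{z=0}^{min{m,n}} Σ_{y=0}^{min{m,n}−z} 4^{y+z}·C(m−y−z, y)·C(n−y−z, z) (zero if m<0 or n<0). Then for all integers m, n ≥ 0, s̄(m, n+1) = s̄(m,n) + 4·s̄(m−1, n−1) + [m ≥ n+1]·4^{n+1}·C(m−n−1, n+1). -/
open Finset

/-- `s̄(m,n) = Σ_{z=0}^{min{m,n}} Σ_{y=0}^{min{m,n}−z} 4^{y+z}·C(m−y−z, y)·C(n−y−z, z)`,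
set to `0` when `m < 0` or `n < 0`. -/
noncomputable def sbar (m n : ℤ) : ℚ :=
  if m < 0 ∨ n < 0 then 0
  else ∑ z ∈ Finset.Icc 0 (min m n), ∑ y ∈ Finset.Icc 0 (min m n - z),
    (4 : ℚ) ^ (y + z) * C (m - y - z) y * C (n - y - z) z

lemma C_eq_choose {a b : ℤ} (hb : 0 ≤ b) :
    C a b = if 0 ≤ a then (a.toNat.choose b.toNat : ℚ) else 0 := by
  rw [C]; split_ifs with h h2
  · rfl
  · omega
  · rw [Nat.choose_eq_zero_of_lt (by omega)]; simp
  · rfl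

lemma C_eq_zero {a b : ℤ} (h : b < 0 ∨ a < b) : C a b = 0 := by
  rw [C, if_neg (by omega)]

lemma term_vanish {m n y z : ℤ} (hy : 0 ≤ y) (hz : 0 ≤ z) (h : min m n < y + z) :
    C (m - y - z) y * C (n - y - z) z = 0 := by
  rcases min_lt_iff.mp h with h'|h'
  · rw [show C (m-y-z) y = 0 from C_eq_zero (Or.inr (by omega)), zero_mul]
  · rw [show C (n-y-z) z = 0 from C_eq_zero (Or.inr (by omega)), mul_zero]

lemma sbar_eq_sum (m n N : ℤ) (hmN : m ≤ N) (hnN : n ≤ N) :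
    sbar m n = ∑ z ∈ Icc 0 N, ∑ y ∈ Icc 0 N,
      (4 : ℚ) ^ (y + z) * C (m - y - z) y * C (n - y - z) z := by
  by_cases hmn : m < 0 ∨ n < 0
  · rw [sbar, if_pos hmn]
    refine (Finset.sum_eq_zero fun z hz => Finset.sum_eq_zero fun y hy => ?_).symm
    simp only [mem_Icc] at hz hy
    rw [mul_assoc, term_vanish hy.1 hz.1 (by omega), mul_zero]
  · push_neg at hmn
    rw [sbar, if_neg (by omega)]
    have h1 : ∀ z ∈ Icc (0:ℤ) (min m n),
        (∑ y ∈ Icc 0 (min m n - z), (4 : ℚ) ^ (y + z) * C (m - y - z) y * C (n - y - z) z)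
        = ∑ y ∈ Icc 0 N, (4 : ℚ) ^ (y + z) * C (m - y - z) y * C (n - y - z) z := by
      intro z hz
      simp only [mem_Icc] at hz
      refine Finset.sum_subset (Icc_subset_Icc_right (by omega)) fun y hy hy' => ?_
      simp only [mem_Icc] at hy hy'
      rw [mul_assoc, term_vanish hy.1 hz.1 (by omega), mul_zero]
    rw [Finset.sum_congr rfl h1]
    refine Finset.sum_subset (Icc_subset_Icc_right (by omega)) fun z hz hz' => ?_
    simp only [mem_Icc] at hz hz'
    refine Finset.sum_eq_zero fun y hy => ?_
    simp only [mem_Icc] at hy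
    rw [mul_assoc, term_vanish hy.1 hz.1 (by omega), mul_zero]

lemma C_pascal (a b : ℤ) (hb : 0 ≤ b) :
    C a b = C (a-1) b + C (a-1) (b-1) + (if a = 0 ∧ b = 0 then 1 else 0) := by
  rcases lt_trichotomy a 0 with h|h|h
  · rw [C_eq_zero (Or.inr (by omega)), C_eq_zero (Or.inr (by omega)),
      C_eq_zero (show b-1 < 0 ∨ a-1 < b-1 by omega), if_neg (by omega)]
    ring
  · subst h
    rcases eq_or_lt_of_le hb with h2|h2
    · simp [C, ← h2]
    · rw [C_eq_zero (Or.inr (by omega)), C_eq_zero (show b < 0 ∨ (0:ℤ)-1 < b by omega),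
        C_eq_zero (show b-1 < 0 ∨ (0:ℤ)-1 < b-1 by omega), if_neg (by omega)]
      ring
  · rw [if_neg (by omega), add_zero]
    rcases eq_or_lt_of_le hb with h2|h2
    · rw [← h2, C_eq_zero (show (0:ℤ)-1 < 0 ∨ a-1 < 0-1 by omega), add_zero]
      rw [C_eq_choose le_rfl, C_eq_choose le_rfl, if_pos (by omega), if_pos (by omega)]
      simp
    · rw [C_eq_choose hb, C_eq_choose hb, C_eq_choose (by omega), if_pos (by omega),
        if_pos (by omega), if_pos (by omega)]
      have ha : a.toNat = (a-1).toNat + 1 := by omega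
      have hbn : b.toNat = (b-1).toNat + 1 := by omega
      rw [ha, hbn, Nat.choose_succ_succ]
      push_cast
      ring

lemma sum_shift (N : ℤ) (hN : 0 ≤ N) (g : ℤ → ℚ) :
    (∑ z ∈ Icc 0 N, g z) = g 0 + ∑ z ∈ Icc 0 (N-1), g (1+z) := by
  have hsplit : Icc (0:ℤ) N = insert 0 (Icc 1 N) := by
    ext x; simp only [mem_Icc, mem_insert]; omega
  rw [hsplit, Finset.sum_insert (by simp)]
  congr 1
  have hmap : Icc (1:ℤ) N = Finset.map (addLeftEmbedding 1) (Icc 0 (N-1)) := by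
    rw [Finset.map_add_left_Icc]; norm_num
  rw [hmap, Finset.sum_map]
  simp only [addLeftEmbedding_apply]

theorem sbar_recurrence_n (m n : ℤ) (hm : 0 ≤ m) (hn : 0 ≤ n) :
    sbar m (n + 1) = sbar m n + 4 * sbar (m - 1) (n - 1) +
      (if n + 1 ≤ m then (4 : ℚ) ^ (n + 1) * C (m - n - 1) (n + 1) else 0) := by
  set N : ℤ := m + n + 1 with hN
  have hextra : (if n + 1 ≤ m then (4 : ℚ) ^ (n + 1) * C (m - n - 1) (n + 1) else 0)
      = (4 : ℚ) ^ (n + 1) * C (m - n - 1) (n + 1) := by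
    split_ifs with h
    · rfl
    · rw [C_eq_zero (Or.inr (by omega)), mul_zero]
  rw [hextra]
  rw [sbar_eq_sum m (n+1) N (by omega) (by omega),
      sbar_eq_sum m n N (by omega) (by omega),
      sbar_eq_sum (m-1) (n-1) (N-1) (by omega) (by omega)]
  have key : ∀ z ∈ Icc (0:ℤ) N, ∀ y ∈ Icc (0:ℤ) N,
      (4 : ℚ) ^ (y + z) * C (m - y - z) y * C (n + 1 - y - z) z
      = (4 : ℚ) ^ (y + z) * C (m - y - z) y * C (n - y - z) z
        + (4 : ℚ) ^ (y + z) * C (m - y - z) y * C (n - y - z) (z - 1)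
        + (if z = 0 ∧ y = n + 1 then (4 : ℚ) ^ (y + z) * C (m - y - z) y else 0) := by
    intro z hz y hy
    simp only [mem_Icc] at hz hy
    have hp := C_pascal (n + 1 - y - z) z hz.1
    have e1 : n + 1 - y - z - 1 = n - y - z := by ring
    rw [e1] at hp
    rw [hp]
    by_cases hc : z = 0 ∧ y = n + 1
    · rw [if_pos hc, if_pos (by omega), mul_add, mul_add, mul_one]
    · rw [if_neg hc, if_neg (by omega), mul_add, mul_add, mul_zero, add_zero]
  rw [Finset.sum_congr rfl (fun z hz => Finset.sum_congr rfl (key z hz))]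
  simp only [Finset.sum_add_distrib]
  have hB : (∑ z ∈ Icc (0:ℤ) N, ∑ y ∈ Icc (0:ℤ) N,
        (4:ℚ)^(y+z) * C (m-y-z) y * C (n-y-z) (z-1))
      = 4 * ∑ z ∈ Icc (0:ℤ) (N-1), ∑ y ∈ Icc (0:ℤ) (N-1),
        (4:ℚ)^(y+z) * C (m-1-y-z) y * C (n-1-y-z) z := by
    rw [sum_shift N (by omega)]
    have h0 : (∑ y ∈ Icc (0:ℤ) N, (4:ℚ)^(y+0) * C (m-y-0) y * C (n-y-0) (0-1)) = 0 :=
      Finset.sum_eq_zero fun y hy => by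
        rw [show C (n-y-0) ((0:ℤ)-1) = 0 from C_eq_zero (Or.inl (by omega)), mul_zero]
    rw [h0, zero_add, Finset.mul_sum]
    refine Finset.sum_congr rfl fun z hz => ?_
    simp only [mem_Icc] at hz
    have step1 : (∑ y ∈ Icc (0:ℤ) N, (4:ℚ)^(y+(1+z)) * C (m-y-(1+z)) y * C (n-y-(1+z)) (1+z-1))
        = ∑ y ∈ Icc (0:ℤ) N, 4 * ((4:ℚ)^(y+z) * C (m-1-y-z) y * C (n-1-y-z) z) := by
      refine Finset.sum_congr rfl fun y hy => ?_
      have e1 : m - y - (1 + z) = m - 1 - y - z := by ring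
      have e2 : n - y - (1 + z) = n - 1 - y - z := by ring
      have e3 : 1 + z - 1 = z := by ring
      have e4 : (4:ℚ)^(y + (1 + z)) = 4 * 4^(y+z) := by
        rw [show y + (1+z) = (y+z) + 1 by ring, zpow_add₀ (by norm_num : (4:ℚ) ≠ 0)]
        ring
      rw [e1, e2, e3, e4]; ring
    rw [step1, ← Finset.mul_sum]
    congr 1
    refine (Finset.sum_subset (Icc_subset_Icc_right (by omega)) fun y hy hy' => ?_).symm
    simp only [mem_Icc] at hy hy'
    rw [show C (m-1-y-z) y = 0 from C_eq_zero (Or.inr (by omega)), mul_zero, zero_mul]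
  have hD : (∑ z ∈ Icc (0:ℤ) N, ∑ y ∈ Icc (0:ℤ) N,
        if z = 0 ∧ y = n+1 then (4:ℚ)^(y+z) * C (m-y-z) y else 0)
      = (4:ℚ)^(n+1) * C (m-n-1) (n+1) := by
    have hin : ∀ z ∈ Icc (0:ℤ) N,
        (∑ y ∈ Icc (0:ℤ) N, if z = 0 ∧ y = n+1 then (4:ℚ)^(y+z) * C (m-y-z) y else 0)
        = if z = 0 then (4:ℚ)^(n+1+z) * C (m-(n+1)-z) (n+1) else 0 := by
      intro z hz
      by_cases h : z = 0
      · subst h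
        rw [if_pos rfl]
        rw [show (fun y => if (0:ℤ) = 0 ∧ y = n+1 then (4:ℚ)^(y+0) * C (m-y-0) y else 0)
            = fun y => if y = n+1 then (4:ℚ)^(y+0) * C (m-y-0) y else 0 from by
          funext y; simp]
        rw [Finset.sum_ite_eq' (Icc (0:ℤ) N) (n+1) (fun y => (4:ℚ)^(y+0) * C (m-y-0) y),
          if_pos (by simp only [mem_Icc]; omega)]
      · rw [if_neg h]
        exact Finset.sum_eq_zero fun y hy => by rw [if_neg (by tauto)]
    rw [Finset.sum_congr rfl hin,
      Finset.sum_ite_eq' (Icc (0:ℤ) N) 0 (fun z => (4:ℚ)^(n+1+z) * C (m-(n+1)-z) (n+1)),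
      if_pos (by simp only [mem_Icc]; omega)]
    have e1 : m - (n+1) - (0:ℤ) = m - n - 1 := by ring
    have e2 : n + 1 + (0:ℤ) = n + 1 := by ring
    rw [e1, e2]
  rw [hB, hD]
end
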